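/- Let a, b ≥ 2 be integers and let Q ≥ 2 be an integer with gcd(Q, a·b) = 1. If gcd(a^m − b^n, Q) > 1 for all integers m, n ≥ 1, then gcd(a−1, Q) > 1 and gcd(b−1, Q) > 1. -/

import Mathlib

lemma gcd_congr_aux {x y Q : ℤ} (h : Q ∣ x - y) : Int.gcd x Q ∣ Int.gcd y Q := by
  rw [← Int.natCast_dvd_natCast]
  apply Int.dvd_coe_gcd
  · have h1 : (↑(Int.gcd x Q) : ℤ) ∣ x := Int.gcd_dvd_left x Q
    have h2 : (↑(Int.gcd x Q) : ℤ) ∣ x - y := dvd_trans (Int.gcd_dvd_right x Q) h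
    have := dvd_sub h1 h2
    simpa using this
  · exact Int.gcd_dvd_right x Q

lemma gcd_congr {x y Q : ℤ} (h : Q ∣ x - y) : Int.gcd x Q = Int.gcd y Q :=
  Nat.dvd_antisymm (gcd_congr_aux h) (gcd_congr_aux (by simpa using h.neg_right))

/-- If `a, b ≥ 2`, `Q ≥ 2` with `gcd(Q, ab) = 1`, and `gcd(a^m - b^n, Q) > 1`
for all `m, n ≥ 1`, then `gcd(a-1, Q) > 1` and `gcd(b-1, Q) > 1`. -/
theorem gcd_a_sub_one_gt_one_of_covering
    (a b Q : ℤ) (ha : 2 ≤ a) (hb : 2 ≤ b) (hQ : 2 ≤ Q)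
    (hcop : Int.gcd Q (a * b) = 1)
    (hcov : ∀ m n : ℕ, 1 ≤ m → 1 ≤ n → 1 < Int.gcd (a ^ m - b ^ n) Q) :
    1 < Int.gcd (a - 1) Q ∧ 1 < Int.gcd (b - 1) Q := by
  set N := Q.toNat with hNdef
  have hQ0 : (0:ℤ) ≤ Q := by linarith
  have hNQ : (N : ℤ) = Q := Int.toNat_of_nonneg hQ0
  have hN2 : 2 ≤ N := by omega
  set k := Nat.totient N with hkdef
  have hk1 : 1 ≤ k := Nat.totient_pos.mpr (by omega)
  have hcop' : IsCoprime Q (a * b) := Int.isCoprime_iff_gcd_eq_one.mpr hcop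
  -- Euler's theorem for x coprime to Q
  have euler : ∀ x : ℤ, 2 ≤ x → IsCoprime Q x → Q ∣ x ^ k - 1 := by
    intro x hx hcopx
    have hxa : (x.natAbs : ℤ) = x := Int.natAbs_of_nonneg (by linarith)
    have hco : Nat.Coprime x.natAbs N := by
      have := Int.isCoprime_iff_gcd_eq_one.mp hcopx
      unfold Int.gcd at this
      rw [Nat.coprime_comm]
      have hN' : N = Q.natAbs := by omega
      rw [hN']
      simpa [Nat.Coprime] using this
    have hm : x.natAbs ^ k ≡ 1 [MOD N] := Nat.ModEq.pow_totient hco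
    have hz : ((x.natAbs : ℤ)) ^ k ≡ 1 [ZMOD (N : ℤ)] := by
      have := Int.natCast_modEq_iff.mpr hm
      simpa using this
    rw [hxa, hNQ] at hz
    have := (Int.ModEq.dvd hz).neg_right
    simpa using this
  have hca : IsCoprime Q a := hcop'.of_mul_right_left
  have hcb : IsCoprime Q b := hcop'.of_mul_right_right
  have hda : Q ∣ a ^ k - 1 := euler a ha hca
  have hdb : Q ∣ b ^ k - 1 := euler b hb hcb
  constructor
  · have h1 := hcov 1 k (le_refl 1) hk1
    rw [pow_one] at h1
    have : Int.gcd (a - b ^ k) Q = Int.gcd (a - 1) Q := by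
      apply gcd_congr
      have : (a - b ^ k) - (a - 1) = -(b ^ k - 1) := by ring
      rw [this]
      exact hdb.neg_right
    rwa [this] at h1
  · have h1 := hcov k 1 hk1 (le_refl 1)
    rw [pow_one] at h1
    have e1 : Int.gcd (a ^ k - b) Q = Int.gcd (1 - b) Q := by
      apply gcd_congr
      have : (a ^ k - b) - (1 - b) = a ^ k - 1 := by ring
      rw [this]; exact hda
    have e2 : Int.gcd (1 - b) Q = Int.gcd (b - 1) Q := by
      rw [show (1 - b) = -(b - 1) by ring, Int.neg_gcd]
    rwa [e1, e2] at h1
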